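/- arXiv:1206.7104 — 3 statements merged into one kernel-verified Lean document; each statement's English description precedes it below -/
import Mathlib

section
/- The following two assertions are equivalent: (A) for every number field k and every morphism π : X → S of finite-type k-schemes there exists a bound B such that for every s ∈ S(k), if X_s(k) is finite then #X_s(k) ≤ B; (B) for every morphism π : X → S of finite-type ℚ-schemes there exists a bound B such that for every s ∈ S(ℚ), if X_s(ℚ) is finite then #X_s(ℚ) ≤ B. -/
open AlgebraicGeometry CategoryTheory

noncomputable section Weil

open MvPolynomial

variable (k : Type) [Field k] [NumberField k]

abbrev wD : ℕ := Module.finrank ℚ k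
noncomputable def wB : Module.Basis (Fin (wD k)) ℚ k := Module.finBasis ℚ k

variable (A : Type) [CommRing A] [Algebra k A]

abbrev WP := MvPolynomial (A × Fin (wD k)) ℚ

def wrel : Set (WP k A) :=
  (Set.range fun x : A × A × Fin (wD k) =>
      (X (x.1 + x.2.1, x.2.2) - X (x.1, x.2.2) - X (x.2.1, x.2.2) : WP k A)) ∪
  (Set.range fun x : A × A × Fin (wD k) =>
      (X (x.1 * x.2.1, x.2.2) -
        ∑ i : Fin (wD k), ∑ i' : Fin (wD k),
          C ((wB k).repr ((wB k) i * (wB k) i') x.2.2) *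
            (X (x.1, i) * X (x.2.1, i')) : WP k A)) ∪
  (Set.range fun x : k × Fin (wD k) =>
      (X (algebraMap k A x.1, x.2) - C ((wB k).repr x.1 x.2) : WP k A))

def wideal : Ideal (WP k A) := Ideal.span (wrel k A)

def Wres := WP k A ⧸ wideal k A

instance : CommRing (Wres k A) := Ideal.Quotient.commRing _
instance : Algebra ℚ (Wres k A) := Ideal.Quotient.algebra _

def wgen (a : A) (j : Fin (wD k)) : Wres k A := Ideal.Quotient.mk _ (X (a, j))

lemma wres_algebraMap (q : ℚ) :
    algebraMap ℚ (Wres k A) q = Ideal.Quotient.mk _ (C q) := rfl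

variable {k A}

lemma wgen_eq_of_mem {p q : WP k A} (h : p - q ∈ wideal k A) :
    Ideal.Quotient.mk (wideal k A) p = Ideal.Quotient.mk (wideal k A) q := by
  rw [← sub_eq_zero, ← map_sub, Ideal.Quotient.eq_zero_iff_mem]; exact h

lemma wgen_add (a a' : A) (j : Fin (wD k)) :
    wgen k A (a + a') j = wgen k A a j + wgen k A a' j := by
  have : (X (a + a', j) - X (a, j) - X (a', j) : WP k A) ∈ wideal k A :=
    Ideal.subset_span (Or.inl (Or.inl ⟨⟨a, a', j⟩, rfl⟩))
  have := wgen_eq_of_mem (p := (X (a + a', j) : WP k A)) (q := X (a, j) + X (a', j))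
    (by simpa [sub_sub] using this)
  exact this

lemma wgen_mul (a a' : A) (j : Fin (wD k)) :
    wgen k A (a * a') j =
      ∑ i : Fin (wD k), ∑ i' : Fin (wD k),
        algebraMap ℚ (Wres k A) ((wB k).repr ((wB k) i * (wB k) i') j) *
          (wgen k A a i * wgen k A a' i') := by
  have : (X (a * a', j) -
      ∑ i : Fin (wD k), ∑ i' : Fin (wD k),
        C ((wB k).repr ((wB k) i * (wB k) i') j) * (X (a, i) * X (a', i')) : WP k A)
      ∈ wideal k A :=
    Ideal.subset_span (Or.inl (Or.inr ⟨⟨a, a', j⟩, rfl⟩))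
  have := wgen_eq_of_mem this
  simp only [map_sum, map_mul] at this
  exact this

lemma wgen_algebraMap (c : k) (j : Fin (wD k)) :
    wgen k A (algebraMap k A c) j = algebraMap ℚ (Wres k A) ((wB k).repr c j) := by
  have : (X (algebraMap k A c, j) - C ((wB k).repr c j) : WP k A) ∈ wideal k A :=
    Ideal.subset_span (Or.inr ⟨⟨c, j⟩, rfl⟩)
  have := wgen_eq_of_mem this
  exact this

end Weil

noncomputable section Weil2
open MvPolynomial
variable {k : Type} [Field k] [NumberField k]
variable {A : Type} [CommRing A] [Algebra k A]

lemma repr_mul (u v : k) (j : Fin (wD k)) :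
    (wB k).repr (u * v) j = ∑ i : Fin (wD k), ∑ i' : Fin (wD k),
      (wB k).repr u i * (wB k).repr v i' * (wB k).repr ((wB k) i * (wB k) i') j := by
  conv_lhs => rw [← (wB k).sum_repr u, ← (wB k).sum_repr v]
  rw [Finset.sum_mul_sum]
  simp only [smul_mul_smul_comm, map_sum, map_smul, Finsupp.coe_finset_sum, Finsupp.coe_smul,
    Finset.sum_apply, Pi.smul_apply, smul_eq_mul, mul_assoc]

lemma ghom_alg (g : Wres k A →+* ℚ) (q : ℚ) :
    g (algebraMap ℚ (Wres k A) q) = q := by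
  simpa using eq_ratCast (g.comp (algebraMap ℚ (Wres k A))) q

/-- from a ring hom `Wres k A →+* ℚ` to a `k`-algebra hom `A →+* k`. -/
def wtau (g : Wres k A →+* ℚ) : A →+* k where
  toFun a := ∑ j, g (wgen k A a j) • (wB k) j
  map_one' := by
    apply (wB k).repr.injective
    ext j
    simp only [(wB k).repr_sum_self]
    rw [show (1 : A) = algebraMap k A 1 from (map_one _).symm, wgen_algebraMap, ghom_alg]
  map_mul' := by
    intro a b
    apply (wB k).repr.injective
    ext j
    rw [repr_mul]
    simp only [(wB k).repr_sum_self]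
    rw [wgen_mul]
    simp only [map_sum, map_mul, ghom_alg]
    refine Finset.sum_congr rfl fun i _ => Finset.sum_congr rfl fun i' _ => by ring
  map_zero' := by
    apply (wB k).repr.injective
    ext j
    simp only [(wB k).repr_sum_self]
    rw [show (0 : A) = algebraMap k A 0 from (map_zero _).symm, wgen_algebraMap, ghom_alg]
  map_add' := by
    intro a b
    apply (wB k).repr.injective
    ext j
    simp only [map_add, Finsupp.add_apply, (wB k).repr_sum_self]
    rw [wgen_add, map_add]

lemma wtau_repr (g : Wres k A →+* ℚ) (a : A) (j : Fin (wD k)) :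
    (wB k).repr (wtau g a) j = g (wgen k A a j) := by
  show (wB k).repr (∑ j, g (wgen k A a j) • (wB k) j) j = _
  simp only [(wB k).repr_sum_self]

lemma wtau_algebraMap (g : Wres k A →+* ℚ) (c : k) :
    wtau g (algebraMap k A c) = c := by
  apply (wB k).repr.injective
  ext j
  rw [wtau_repr, wgen_algebraMap, ghom_alg]

end Weil2

noncomputable section Weil3
open MvPolynomial
variable {k : Type} [Field k] [NumberField k]
variable {A R : Type} [CommRing A] [Algebra k A] [CommRing R] [Algebra k R]

lemma weval_vanish (τ : A →+* k) (hτ : τ.comp (algebraMap k A) = RingHom.id k) :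
    ∀ p ∈ wideal k A,
      MvPolynomial.eval (fun v : A × Fin (wD k) => (wB k).repr (τ v.1) v.2) p = 0 := by
  intro p hp
  refine RingHom.mem_ker.mp (Ideal.span_le.mpr ?_ hp)
  rintro q (( ⟨⟨a, a', j⟩, rfl⟩ | ⟨⟨a, a', j⟩, rfl⟩) | ⟨⟨c, j⟩, rfl⟩) <;>
    simp only [SetLike.mem_coe, RingHom.mem_ker, map_sub, map_add, map_sum, map_mul,
      eval_X, eval_C]
  · simp [map_add]
  · rw [repr_mul (τ a) (τ a'), sub_eq_zero]
    refine Finset.sum_congr rfl fun i _ => Finset.sum_congr rfl fun i' _ => by ring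
  · rw [sub_eq_zero, show τ (algebraMap k A c) = c from RingHom.congr_fun hτ c]

def weval (τ : A →+* k) (hτ : τ.comp (algebraMap k A) = RingHom.id k) : Wres k A →+* ℚ :=
  Ideal.Quotient.lift _ _ (weval_vanish τ hτ)

lemma weval_wgen (τ : A →+* k) (hτ) (a : A) (j : Fin (wD k)) :
    weval τ hτ (wgen k A a j) = (wB k).repr (τ a) j := by
  show MvPolynomial.eval (fun v : A × Fin (wD k) => (wB k).repr (τ v.1) v.2) (X (a, j)) = _
  rw [eval_X]

lemma whom_ext {g g' : Wres k A →+* ℚ}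
    (h : ∀ a j, g (wgen k A a j) = g' (wgen k A a j)) : g = g' := by
  apply Ideal.Quotient.ringHom_ext
  apply MvPolynomial.ringHom_ext
  · intro r
    exact DFunLike.congr_fun
      (Subsingleton.elim ((g.comp (Ideal.Quotient.mk _)).comp (C : ℚ →+* WP k A))
        ((g'.comp (Ideal.Quotient.mk _)).comp (C : ℚ →+* WP k A))) r
  · intro v
    exact h v.1 v.2

/-- the key equivalence: ring homs `Wres k A →+* ℚ` are `k`-algebra points of `A`. -/
def wequiv : (Wres k A →+* ℚ) ≃ {τ : A →+* k // τ.comp (algebraMap k A) = RingHom.id k} where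
  toFun g := ⟨wtau g, by ext c; simpa using wtau_algebraMap g c⟩
  invFun τ := weval τ.1 τ.2
  left_inv g := whom_ext fun a j => by rw [weval_wgen, wtau_repr]
  right_inv τ := Subtype.ext (by
    ext a
    apply (wB k).repr.injective
    ext j
    rw [wtau_repr, weval_wgen])

lemma wmap_vanish (φ : R →+* A) (hφ : φ.comp (algebraMap k R) = algebraMap k A) :
    ∀ p ∈ wideal k R,
      (Ideal.Quotient.mk (wideal k A)).comp
        ((MvPolynomial.rename (fun v : R × Fin (wD k) => (φ v.1, v.2))).toRingHom) p = 0 := by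
  intro p hp
  refine RingHom.mem_ker.mp (Ideal.span_le.mpr ?_ hp)
  rintro q (( ⟨⟨a, a', j⟩, rfl⟩ | ⟨⟨a, a', j⟩, rfl⟩) | ⟨⟨c, j⟩, rfl⟩) <;>
    simp only [SetLike.mem_coe, RingHom.mem_ker, RingHom.comp_apply,
      AlgHom.toRingHom_eq_coe, AlgHom.coe_toRingHom, Ideal.Quotient.eq_zero_iff_mem]
  · exact Ideal.subset_span (Or.inl (Or.inl ⟨⟨φ a, φ a', j⟩, by
      simp [map_add φ, rename_X]⟩))
  · exact Ideal.subset_span (Or.inl (Or.inr ⟨⟨φ a, φ a', j⟩, by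
      simp [map_mul φ, rename_X, rename_C]⟩))
  · exact Ideal.subset_span (Or.inr ⟨⟨c, j⟩, by
      simp [rename_X, show φ ((algebraMap k R) c) = algebraMap k A c from RingHom.congr_fun hφ c]⟩)

/-- functoriality of `Wres`. -/
def wmap (φ : R →+* A) (hφ : φ.comp (algebraMap k R) = algebraMap k A) :
    Wres k R →+* Wres k A :=
  Ideal.Quotient.lift _ _ (wmap_vanish φ hφ)

lemma wmap_wgen (φ : R →+* A) (hφ : φ.comp (algebraMap k R) = algebraMap k A)
    (r : R) (j : Fin (wD k)) :
    wmap φ hφ (wgen k R r j) = wgen k A (φ r) j := by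
  show (Ideal.Quotient.mk (wideal k A)).comp
      ((MvPolynomial.rename (fun v : R × Fin (wD k) => (φ v.1, v.2))).toRingHom) (X (r, j)) = _
  simp [wgen, rename_X]

lemma wtau_comp (φ : R →+* A) (hφ : φ.comp (algebraMap k R) = algebraMap k A)
    (g : Wres k A →+* ℚ) :
    (wtau g).comp φ = wtau (g.comp (wmap φ hφ)) := by
  ext r
  apply (wB k).repr.injective
  ext j
  rw [show ((wtau g).comp φ) r = wtau g (φ r) from rfl, wtau_repr, wtau_repr,
    RingHom.comp_apply, wmap_wgen]

end Weil3

noncomputable section Weil4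
open MvPolynomial
variable {k : Type} [Field k] [NumberField k]
variable {A : Type} [CommRing A] [Algebra k A]

lemma wres_finiteType (h : Algebra.FiniteType k A) :
    Algebra.FiniteType ℚ (Wres k A) := by
  classical
  obtain ⟨s, hs⟩ := h.out
  refine ⟨⟨(s ×ˢ (Finset.univ : Finset (Fin (wD k)))).image fun v => wgen k A v.1 v.2, ?_⟩⟩
  rw [eq_top_iff]
  set Sub := Algebra.adjoin ℚ
    (↑((s ×ˢ (Finset.univ : Finset (Fin (wD k)))).image fun v => wgen k A v.1 v.2) :
      Set (Wres k A)) with hSub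
  have hgen : ∀ a : A, ∀ j, wgen k A a j ∈ Sub := by
    intro a
    have ha : a ∈ Algebra.adjoin k (↑s : Set A) := by rw [hs]; trivial
    refine Algebra.adjoin_induction (p := fun x _ => ∀ j, wgen k A x j ∈ Sub)
      ?_ ?_ ?_ ?_ ha
    · intro x hx j
      refine Algebra.subset_adjoin ?_
      simp only [Finset.coe_image, Set.mem_image, Finset.mem_coe, Finset.mem_product]
      exact ⟨⟨x, j⟩, ⟨hx, Finset.mem_univ _⟩, rfl⟩
    · intro c j
      rw [wgen_algebraMap]
      exact Subalgebra.algebraMap_mem _ _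
    · intro x y hx hy ihx ihy j
      rw [wgen_add]
      exact add_mem (ihx j) (ihy j)
    · intro x y hx hy ihx ihy j
      rw [wgen_mul]
      exact Subalgebra.sum_mem _ fun i _ => Subalgebra.sum_mem _ fun i' _ =>
        mul_mem (Subalgebra.algebraMap_mem _ _) (mul_mem (ihx i) (ihy i'))
  intro x _
  obtain ⟨p, rfl⟩ := Ideal.Quotient.mk_surjective x
  induction p using MvPolynomial.induction_on with
  | C q =>
    rw [show (Ideal.Quotient.mk (wideal k A)) (C q) = algebraMap ℚ (Wres k A) q from rfl]
    exact Subalgebra.algebraMap_mem _ _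
  | add p q ihp ihq =>
    rw [map_add]
    exact add_mem (ihp trivial) (ihq trivial)
  | mul_X p v ih =>
    rw [map_mul]
    exact mul_mem (ih trivial) (hgen v.1 v.2)

lemma wtau_injective : Function.Injective (wtau : (Wres k A →+* ℚ) → (A →+* k)) := by
  intro g g' h
  have : (wequiv g : {τ : A →+* k // τ.comp (algebraMap k A) = RingHom.id k}) = wequiv g' :=
    Subtype.ext h
  exact wequiv.injective this

lemma wtau_weval (τ : A →+* k) (hτ : τ.comp (algebraMap k A) = RingHom.id k) :
    wtau (weval τ hτ) = τ := by
  ext a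
  apply (wB k).repr.injective
  ext j
  rw [wtau_repr, weval_wgen]

end Weil4

section RingCase
open AlgebraicGeometry CategoryTheory

def QHyp : Prop :=
  ∀ (X S : Scheme) (pX : X ⟶ Spec (CommRingCat.of ℚ))
      (pS : S ⟶ Spec (CommRingCat.of ℚ)),
    LocallyOfFiniteType pX → QuasiCompact pX →
    LocallyOfFiniteType pS → QuasiCompact pS →
    ∀ π : X ⟶ S, π ≫ pS = pX →
    ∃ B : ℕ, ∀ s : Spec (CommRingCat.of ℚ) ⟶ S, s ≫ pS = 𝟙 _ →
      {t : Spec (CommRingCat.of ℚ) ⟶ X | t ≫ π = s}.Finite →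
      {t : Spec (CommRingCat.of ℚ) ⟶ X | t ≫ π = s}.ncard ≤ B

lemma ratAlg_finiteType {T : Type} [CommRing T] [Algebra ℚ T] (h : Algebra.FiniteType ℚ T) :
    (algebraMap ℚ T).FiniteType := by
  show @Algebra.FiniteType ℚ T _ _ (algebraMap ℚ T).toAlgebra
  exact Subsingleton.elim ‹Algebra ℚ T› (algebraMap ℚ T).toAlgebra ▸ h

theorem ring_case (hQ : QHyp)
    {k : Type} [Field k] [NumberField k]
    (R A : Type) [CommRing R] [CommRing A] [Algebra k R] [Algebra k A]
    (hR : Algebra.FiniteType k R) (hA : Algebra.FiniteType k A)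
    (φ : R →+* A) (hφ : φ.comp (algebraMap k R) = algebraMap k A) :
    ∃ B : ℕ, ∀ σ : R →+* k, σ.comp (algebraMap k R) = RingHom.id k →
      {τ : A →+* k | τ.comp φ = σ}.Finite → {τ : A →+* k | τ.comp φ = σ}.ncard ≤ B := by
  haveI hss : ∀ (T : Type) [CommRing T],
      Subsingleton (CommRingCat.of ℚ ⟶ CommRingCat.of T) := fun T _ =>
    ⟨fun f g => CommRingCat.hom_ext (Subsingleton.elim _ _)⟩
  set RA := Wres k A
  set RR := Wres k R
  set Φ : RR →+* RA := wmap φ hφ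
  set pX : Spec (CommRingCat.of RA) ⟶ Spec (CommRingCat.of ℚ) :=
    Spec.map (CommRingCat.ofHom (algebraMap ℚ RA)) with hpX
  set pS : Spec (CommRingCat.of RR) ⟶ Spec (CommRingCat.of ℚ) :=
    Spec.map (CommRingCat.ofHom (algebraMap ℚ RR)) with hpS
  set Pi : Spec (CommRingCat.of RA) ⟶ Spec (CommRingCat.of RR) :=
    Spec.map (CommRingCat.ofHom Φ) with hPi
  have hftA : (algebraMap ℚ RA).FiniteType := ratAlg_finiteType (wres_finiteType hA)
  have hftR : (algebraMap ℚ RR).FiniteType := ratAlg_finiteType (wres_finiteType hR)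
  have hlftX : LocallyOfFiniteType pX :=
    (HasRingHomProperty.Spec_iff (P := @LocallyOfFiniteType)).mpr hftA
  have hlftS : LocallyOfFiniteType pS :=
    (HasRingHomProperty.Spec_iff (P := @LocallyOfFiniteType)).mpr hftR
  have hcomp : Pi ≫ pS = pX := by
    rw [hPi, hpS, hpX, ← Spec.map_comp]
    exact congrArg Spec.map (Subsingleton.elim _ _)
  obtain ⟨B, hB⟩ := hQ _ _ pX pS hlftX inferInstance hlftS inferInstance Pi hcomp
  refine ⟨B, fun σ hσ hfin => ?_⟩
  set gσ : RR →+* ℚ := weval σ hσ with hgσ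
  set s' : Spec (CommRingCat.of ℚ) ⟶ Spec (CommRingCat.of RR) :=
    Spec.map (CommRingCat.ofHom gσ) with hs'def
  have hs' : s' ≫ pS = 𝟙 _ := by
    rw [hs'def, hpS, ← Spec.map_comp, ← Spec.map_id]
    exact congrArg Spec.map (Subsingleton.elim _ _)
  set θ : (Spec (CommRingCat.of ℚ) ⟶ Spec (CommRingCat.of RA)) → (A →+* k) :=
    fun t => wtau (show RA →+* ℚ from (Spec.preimage t).hom) with hθ
  have hθinj : Function.Injective θ := by
    intro t t' h
    have h2 := wtau_injective h
    rw [← Spec.map_preimage t, ← Spec.map_preimage t',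
      show Spec.preimage t = Spec.preimage t' from CommRingCat.hom_ext h2]
  have himg : θ '' {t | t ≫ Pi = s'} = {τ : A →+* k | τ.comp φ = σ} := by
    ext τ
    constructor
    · rintro ⟨t, ht, rfl⟩
      have h1 : CommRingCat.ofHom Φ ≫ Spec.preimage t = CommRingCat.ofHom gσ := by
        apply Spec.map_injective
        rw [Spec.map_comp, Spec.map_preimage]
        exact ht
      show (wtau (show RA →+* ℚ from (Spec.preimage t).hom)).comp φ = σ
      rw [wtau_comp φ hφ]
      have h2 : (show RA →+* ℚ from (Spec.preimage t).hom).comp Φ = gσ := congrArg CommRingCat.Hom.hom h1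
      rw [h2, hgσ, wtau_weval]
    · intro hτ
      have hτ' : τ.comp φ = σ := hτ
      have hτk : τ.comp (algebraMap k A) = RingHom.id k := by
        ext c
        show τ (algebraMap k A c) = c
        rw [← RingHom.congr_fun hφ c]
        show (τ.comp φ) (algebraMap k R c) = c
        rw [hτ']
        exact RingHom.congr_fun hσ c
      refine ⟨Spec.map (CommRingCat.ofHom (weval τ hτk)), ?_, ?_⟩
      · show Spec.map (CommRingCat.ofHom (weval τ hτk)) ≫ Pi = s'
        rw [hPi, ← Spec.map_comp, hs'def]
        refine congrArg Spec.map ?_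
        show CommRingCat.ofHom ((weval τ hτk).comp Φ) = CommRingCat.ofHom gσ
        refine congrArg CommRingCat.ofHom ?_
        apply wtau_injective
        rw [← wtau_comp φ hφ, wtau_weval, hτ', hgσ, wtau_weval]
      · show wtau (show RA →+* ℚ from
            (Spec.preimage (Spec.map (CommRingCat.ofHom (weval τ hτk)))).hom) = τ
        rw [Spec.preimage_map]
        exact wtau_weval τ hτk
  have hfin' : {t | t ≫ Pi = s'}.Finite :=
    Set.Finite.of_finite_image (himg ▸ hfin) hθinj.injOn
  have hcount := hB s' hs' hfin'
  calc {τ : A →+* k | τ.comp φ = σ}.ncard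
      = ({t | t ≫ Pi = s'}).ncard := by
        rw [← himg, Set.ncard_image_of_injective _ hθinj]
    _ ≤ B := hcount

end RingCase

section AffineCase
open AlgebraicGeometry CategoryTheory

theorem affine_case (hQ : QHyp) {k : Type} [Field k] [NumberField k]
    (W V : Scheme) [IsAffine W] [IsAffine V]
    (pW : W ⟶ Spec (CommRingCat.of k)) (pV : V ⟶ Spec (CommRingCat.of k))
    (hlftW : LocallyOfFiniteType pW) (hlftV : LocallyOfFiniteType pV)
    (ρ : W ⟶ V) (hρ : ρ ≫ pV = pW) :
    ∃ B : ℕ, ∀ s' : Spec (CommRingCat.of k) ⟶ V, s' ≫ pV = 𝟙 _ →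
      {t : Spec (CommRingCat.of k) ⟶ W | t ≫ ρ = s'}.Finite →
      {t : Spec (CommRingCat.of k) ⟶ W | t ≫ ρ = s'}.ncard ≤ B := by
  set GW := Γ(W, ⊤)
  set GV := Γ(V, ⊤)
  set ρh : Spec GW ⟶ Spec GV := W.isoSpec.inv ≫ ρ ≫ V.isoSpec.hom with hρh
  set φ : GV ⟶ GW := Spec.preimage ρh with hφdef
  set ηW : CommRingCat.of k ⟶ GW := Spec.preimage (W.isoSpec.inv ≫ pW) with hηW
  set ηV : CommRingCat.of k ⟶ GV := Spec.preimage (V.isoSpec.inv ≫ pV) with hηV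
  letI : Algebra k ↑GW := (show k →+* ↑GW from ηW.hom).toAlgebra
  letI : Algebra k ↑GV := (show k →+* ↑GV from ηV.hom).toAlgebra
  have hφalg : (show ↑GV →+* ↑GW from φ.hom).comp (algebraMap k ↑GV) = algebraMap k ↑GW := by
    refine congrArg CommRingCat.Hom.hom (?_ : ηV ≫ φ = ηW)
    apply Spec.map_injective
    rw [Spec.map_comp, hφdef, hηW, hηV, Spec.map_preimage, Spec.map_preimage, hρh,
      Spec.map_preimage]
    simp only [Category.assoc, Iso.hom_inv_id_assoc]
    rw [hρ]
  have hftW : Algebra.FiniteType k ↑GW := by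
    have h1 : LocallyOfFiniteType (Spec.map ηW) := by
      rw [hηW, Spec.map_preimage]
      infer_instance
    exact (HasRingHomProperty.Spec_iff (P := @LocallyOfFiniteType)).mp h1
  have hftV : Algebra.FiniteType k ↑GV := by
    have h1 : LocallyOfFiniteType (Spec.map ηV) := by
      rw [hηV, Spec.map_preimage]
      infer_instance
    exact (HasRingHomProperty.Spec_iff (P := @LocallyOfFiniteType)).mp h1
  obtain ⟨B, hBr⟩ := ring_case hQ ↑GV ↑GW hftV hftW (show ↑GV →+* ↑GW from φ.hom) hφalg
  refine ⟨B, fun s' hs' hfin => ?_⟩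
  set σ : GV ⟶ CommRingCat.of k := Spec.preimage (s' ≫ V.isoSpec.hom) with hσdef
  have hσ : (show ↑GV →+* k from σ.hom).comp (algebraMap k ↑GV) = RingHom.id k := by
    refine congrArg CommRingCat.Hom.hom (?_ : ηV ≫ σ = 𝟙 (CommRingCat.of k))
    apply Spec.map_injective
    rw [Spec.map_comp, hσdef, hηV, Spec.map_preimage, Spec.map_preimage, Spec.map_id]
    rw [Category.assoc, Iso.hom_inv_id_assoc, hs']
  set θ2 : (Spec (CommRingCat.of k) ⟶ W) → (↑GW →+* k) :=
    fun t => show ↑GW →+* k from (Spec.preimage (t ≫ W.isoSpec.hom)).hom with hθ2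
  have hθ2inj : Function.Injective θ2 := by
    intro t t' h
    have h2 : t ≫ W.isoSpec.hom = t' ≫ W.isoSpec.hom := by
      rw [← Spec.map_preimage (t ≫ W.isoSpec.hom), ← Spec.map_preimage (t' ≫ W.isoSpec.hom),
        show Spec.preimage (t ≫ W.isoSpec.hom) = Spec.preimage (t' ≫ W.isoSpec.hom) from CommRingCat.hom_ext h]
    simpa using h2 =≫ W.isoSpec.inv
  have hkey : ∀ t : Spec (CommRingCat.of k) ⟶ W,
      t ≫ ρ = s' ↔ φ ≫ Spec.preimage (t ≫ W.isoSpec.hom) = σ := by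
    intro t
    have e1 : t ≫ ρ = s' ↔ (t ≫ W.isoSpec.hom) ≫ ρh = s' ≫ V.isoSpec.hom := by
      rw [hρh]
      constructor
      · intro h
        rw [Category.assoc, Iso.hom_inv_id_assoc, ← Category.assoc, h]
      · intro h
        have := h =≫ V.isoSpec.inv
        simpa using this
    have e2 : ρh = Spec.map φ := (Spec.map_preimage ρh).symm
    rw [e1, e2, ← Spec.map_preimage (t ≫ W.isoSpec.hom), ← Spec.map_comp,
      show s' ≫ V.isoSpec.hom = Spec.map σ from (Spec.map_preimage _).symm, Spec.map_inj,
      Spec.preimage_map]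
  have himg : θ2 '' {t | t ≫ ρ = s'} = {τ : ↑GW →+* k | τ.comp (show ↑GV →+* ↑GW from φ.hom) = σ.hom} := by
    ext τ
    constructor
    · rintro ⟨t, ht, rfl⟩
      exact congrArg CommRingCat.Hom.hom ((hkey t).mp ht)
    · intro hτ
      refine ⟨Spec.map (show GW ⟶ CommRingCat.of k from CommRingCat.ofHom τ) ≫ W.isoSpec.inv, ?_, ?_⟩
      · show _ ≫ ρ = s'
        rw [hkey]
        have e : (Spec.map (show GW ⟶ CommRingCat.of k from CommRingCat.ofHom τ) ≫ W.isoSpec.inv) ≫ W.isoSpec.hom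
            = Spec.map (show GW ⟶ CommRingCat.of k from CommRingCat.ofHom τ) := by
          simp [Category.assoc]
        rw [e, Spec.preimage_map]
        exact CommRingCat.hom_ext hτ
      · show θ2 _ = τ
        rw [hθ2]
        have e : (Spec.map (show GW ⟶ CommRingCat.of k from CommRingCat.ofHom τ) ≫ W.isoSpec.inv) ≫ W.isoSpec.hom
            = Spec.map (show GW ⟶ CommRingCat.of k from CommRingCat.ofHom τ) := by
          simp [Category.assoc]
        show (show ↑GW →+* k from (Spec.preimage
          ((Spec.map (show GW ⟶ CommRingCat.of k from CommRingCat.ofHom τ) ≫ W.isoSpec.inv) ≫ W.isoSpec.hom)).hom) = τ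
        rw [e, Spec.preimage_map]
        rfl
  have hfin' : {τ : ↑GW →+* k | τ.comp (show ↑GV →+* ↑GW from φ.hom) = σ.hom}.Finite := by
    rw [← himg]
    exact hfin.image _
  have hcount := hBr (show ↑GV →+* k from σ.hom) hσ hfin'
  have : {t : Spec (CommRingCat.of k) ⟶ W | t ≫ ρ = s'}.ncard
      = {τ : ↑GW →+* k | τ.comp (show ↑GV →+* ↑GW from φ.hom) = σ.hom}.ncard := by
    rw [← himg, Set.ncard_image_of_injective _ hθ2inj]
  rw [this]
  exact hcount

end AffineCase

section Main
open AlgebraicGeometry CategoryTheory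

lemma ncard_biUnion_le' {α β : Type*} (t : Finset α) (f : α → Set β) :
    (⋃ x ∈ t, f x).ncard ≤ ∑ x ∈ t, (f x).ncard := by
  classical
  induction t using Finset.induction_on with
  | empty => simp
  | insert a tt hx ih =>
    rw [Finset.set_biUnion_insert, Finset.sum_insert hx]
    exact le_trans (Set.ncard_union_le _ _) (Nat.add_le_add_left ih _)

theorem main_reduction (hQ : QHyp) (k : Type) [Field k] [NumberField k]
    (X S : Scheme) (pX : X ⟶ Spec (CommRingCat.of k))
    (pS : S ⟶ Spec (CommRingCat.of k))
    (hlftX : LocallyOfFiniteType pX) (hqcX : QuasiCompact pX)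
    (hlftS : LocallyOfFiniteType pS) (hqcS : QuasiCompact pS)
    (π : X ⟶ S) (hπ : π ≫ pS = pX) :
    ∃ B : ℕ, ∀ s : Spec (CommRingCat.of k) ⟶ S, s ≫ pS = 𝟙 _ →
      {t : Spec (CommRingCat.of k) ⟶ X | t ≫ π = s}.Finite →
      {t : Spec (CommRingCat.of k) ⟶ X | t ≫ π = s}.ncard ≤ B := by
  haveI := hlftX; haveI := hqcX; haveI := hlftS; haveI := hqcS
  haveI : CompactSpace X := (quasiCompact_iff_compactSpace pX).mp hqcX
  -- affine covers
  have hV : ∀ y : S, ∃ v : S.Opens, IsAffineOpen v ∧ y ∈ v := by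
    intro y
    obtain ⟨v, hv, hyv, -⟩ := TopologicalSpace.Opens.isBasis_iff_nbhd.mp S.isBasis_affineOpens
      (show y ∈ (⊤ : S.Opens) from trivial)
    exact ⟨v, hv, hyv⟩
  choose V hVaff hVmem using hV
  have hW : ∀ x : X, ∃ w : X.Opens, IsAffineOpen w ∧ x ∈ w ∧ w ≤ π ⁻¹ᵁ V (π.base x) := by
    intro x
    obtain ⟨w, hw, hxw, hle⟩ := TopologicalSpace.Opens.isBasis_iff_nbhd.mp X.isBasis_affineOpens
      (show x ∈ π ⁻¹ᵁ V (π.base x) from hVmem _)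
    exact ⟨w, hw, hxw, hle⟩
  choose W hWaff hWmem hWle using hW
  obtain ⟨tf, htf⟩ := IsCompact.elim_finite_subcover (CompactSpace.isCompact_univ (X := X))
    (fun x => (W x : Set X)) (fun x => (W x).2) (fun x _ => Set.mem_iUnion.mpr ⟨x, hWmem x⟩)
  have hmemW : ∀ (x : X) (p : (W x).toScheme), (W x).ι.base p ∈ W x := by
    intro x p
    have : (W x).ι.base p ∈ Set.range (W x).ι.base := ⟨p, rfl⟩
    rwa [Scheme.Opens.range_ι] at this
  have hrange : ∀ x : X, Set.range ((W x).ι ≫ π).base ⊆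
      Set.range (V (π.base x)).ι.base := by
    intro x
    rw [Scheme.Opens.range_ι]
    rintro _ ⟨p, rfl⟩
    show π.base ((W x).ι.base p) ∈ _
    exact hWle x (hmemW x p)
  have hbound : ∀ x : X, ∃ Bx : ℕ,
      ∀ s' : Spec (CommRingCat.of k) ⟶ (V (π.base x)).toScheme,
        s' ≫ ((V (π.base x)).ι ≫ pS) = 𝟙 _ →
        {u : Spec (CommRingCat.of k) ⟶ (W x).toScheme |
          u ≫ IsOpenImmersion.lift (V (π.base x)).ι ((W x).ι ≫ π) (hrange x) = s'}.Finite →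
        {u : Spec (CommRingCat.of k) ⟶ (W x).toScheme |
          u ≫ IsOpenImmersion.lift (V (π.base x)).ι ((W x).ι ≫ π) (hrange x) = s'}.ncard ≤ Bx := by
    intro x
    haveI : IsAffine (W x).toScheme := hWaff x
    haveI : IsAffine (V (π.base x)).toScheme := hVaff (π.base x)
    refine affine_case hQ (W x).toScheme (V (π.base x)).toScheme
      ((W x).ι ≫ pX) ((V (π.base x)).ι ≫ pS) inferInstance inferInstance
      (IsOpenImmersion.lift (V (π.base x)).ι ((W x).ι ≫ π) (hrange x)) ?_
    rw [← Category.assoc, IsOpenImmersion.lift_fac, Category.assoc, hπ]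
  choose Bf hBf using hbound
  refine ⟨∑ x ∈ tf, Bf x, fun s hs hfin => ?_⟩
  set E : X → Set (Spec (CommRingCat.of k) ⟶ X) :=
    fun x => (fun u => u ≫ (W x).ι) ''
      {u : Spec (CommRingCat.of k) ⟶ (W x).toScheme | u ≫ ((W x).ι ≫ π) = s} with hE
  have hinj : ∀ x, Function.Injective
      (fun u : Spec (CommRingCat.of k) ⟶ (W x).toScheme => u ≫ (W x).ι) :=
    fun x u u' h => by rwa [cancel_mono] at h
  have himgsub : ∀ x, E x ⊆ {t | t ≫ π = s} := by
    rintro x _ ⟨u, hu, rfl⟩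
    show (u ≫ (W x).ι) ≫ π = s
    rw [Category.assoc]
    exact hu
  have hsub : {t : Spec (CommRingCat.of k) ⟶ X | t ≫ π = s} ⊆ ⋃ x ∈ tf, E x := by
    intro t ht
    have hx0 : t.base default ∈ ⋃ x ∈ tf, (W x : Set X) := htf (Set.mem_univ _)
    obtain ⟨x, hxt, hx0⟩ := Set.mem_iUnion₂.mp hx0
    have hr : Set.range t.base ⊆ Set.range (W x).ι.base := by
      rw [Scheme.Opens.range_ι]
      rintro _ ⟨p, rfl⟩
      rwa [Subsingleton.elim p default]
    refine Set.mem_biUnion hxt ⟨IsOpenImmersion.lift (W x).ι t hr, ?_,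
      IsOpenImmersion.lift_fac _ _ hr⟩
    show _ ≫ ((W x).ι ≫ π) = s
    rw [← Category.assoc, IsOpenImmersion.lift_fac]
    exact ht
  have hEfinb : ∀ x, (E x).Finite := fun x => hfin.subset (himgsub x)
  have hEcard : ∀ x ∈ tf, (E x).ncard ≤ Bf x := by
    intro x hx
    set Ex0 := {u : Spec (CommRingCat.of k) ⟶ (W x).toScheme | u ≫ ((W x).ι ≫ π) = s} with hEx0
    have hEx0fin : Ex0.Finite := Set.Finite.of_finite_image (hEfinb x) ((hinj x).injOn)
    have hEcard2 : (E x).ncard = Ex0.ncard := by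
      rw [hE]
      exact Set.ncard_image_of_injective _ (hinj x)
    rcases Set.eq_empty_or_nonempty Ex0 with he | ⟨u0, hu0⟩
    · rw [hEcard2, he]
      simp
    · have hu0' : u0 ≫ ((W x).ι ≫ π) = s := hu0
      have hrs : Set.range s.base ⊆ Set.range (V (π.base x)).ι.base := by
        rw [← hu0']
        refine le_trans ?_ (hrange x)
        rintro _ ⟨p, rfl⟩
        exact ⟨u0.base p, rfl⟩
      set s' := IsOpenImmersion.lift (V (π.base x)).ι s hrs with hs'def
      have hs'fac : s' ≫ (V (π.base x)).ι = s := IsOpenImmersion.lift_fac _ _ hrs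
      have hs'p : s' ≫ ((V (π.base x)).ι ≫ pS) = 𝟙 _ := by
        rw [← Category.assoc, hs'fac, hs]
      have hEeq : Ex0 = {u : Spec (CommRingCat.of k) ⟶ (W x).toScheme |
          u ≫ IsOpenImmersion.lift (V (π.base x)).ι ((W x).ι ≫ π) (hrange x) = s'} := by
        ext u
        constructor
        · intro hu
          have h1 : (u ≫ IsOpenImmersion.lift (V (π.base x)).ι ((W x).ι ≫ π) (hrange x)) ≫
              (V (π.base x)).ι = s' ≫ (V (π.base x)).ι := by
            rw [Category.assoc, IsOpenImmersion.lift_fac, hs'fac]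
            exact hu
          exact (cancel_mono _).mp h1
        · intro hu
          show u ≫ ((W x).ι ≫ π) = s
          rw [← IsOpenImmersion.lift_fac (V (π.base x)).ι ((W x).ι ≫ π) (hrange x),
            ← Category.assoc, hu, hs'fac]
      rw [hEcard2, hEeq]
      exact hBf x s' hs'p (hEeq ▸ hEx0fin)
  calc {t : Spec (CommRingCat.of k) ⟶ X | t ≫ π = s}.ncard
      ≤ (⋃ x ∈ tf, E x).ncard := by
        refine Set.ncard_le_ncard hsub (hfin.subset ?_)
        exact Set.iUnion₂_subset fun x _ => himgsub x
    _ ≤ ∑ x ∈ tf, (E x).ncard := ncard_biUnion_le' _ _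
    _ ≤ ∑ x ∈ tf, Bf x := Finset.sum_le_sum hEcard

end Main


/-- **Step in the proof of the Proposition.** Question "main" for all number fields
is equivalent to Question "main" for `ℚ`. -/
theorem uniform_boundedness_number_fields_iff_rat
    : (∀ (k : Type) [Field k] [NumberField k],
        ∀ (X S : Scheme) (pX : X ⟶ Spec (CommRingCat.of k))
          (pS : S ⟶ Spec (CommRingCat.of k)),
        LocallyOfFiniteType pX → QuasiCompact pX →
        LocallyOfFiniteType pS → QuasiCompact pS →
        ∀ π : X ⟶ S, π ≫ pS = pX →
        ∃ B : ℕ, ∀ s : Spec (CommRingCat.of k) ⟶ S, s ≫ pS = 𝟙 _ →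
          {t : Spec (CommRingCat.of k) ⟶ X | t ≫ π = s}.Finite →
          {t : Spec (CommRingCat.of k) ⟶ X | t ≫ π = s}.ncard ≤ B)
      ↔
      (∀ (X S : Scheme) (pX : X ⟶ Spec (CommRingCat.of ℚ))
          (pS : S ⟶ Spec (CommRingCat.of ℚ)),
        LocallyOfFiniteType pX → QuasiCompact pX →
        LocallyOfFiniteType pS → QuasiCompact pS →
        ∀ π : X ⟶ S, π ≫ pS = pX →
        ∃ B : ℕ, ∀ s : Spec (CommRingCat.of ℚ) ⟶ S, s ≫ pS = 𝟙 _ →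
          {t : Spec (CommRingCat.of ℚ) ⟶ X | t ≫ π = s}.Finite →
          {t : Spec (CommRingCat.of ℚ) ⟶ X | t ≫ π = s}.ncard ≤ B) := by
  constructor
  · intro h
    exact h ℚ
  · intro hQ k _ _ X S pX pS hlftX hqcX hlftS hqcS π hπ
    exact main_reduction hQ k X S pX pS hlftX hqcX hlftS hqcS π hπ
end

section
/- For all natural numbers r, m, d there exists a natural number n ≥ r such that for every system of polynomials f_1,…,f_m ∈ ℚ[x_1,…,x_r], each of total degree at most d, there exists a polynomial g ∈ ℚ[x_1,…,x_n] of total degree exactly 4 such that the projection ℚ^n → ℚ^r onto the first r coordinates restricts to a bijection from {y ∈ ℚ^n : g(y) = 0} onto {x ∈ ℚ^r : f_1(x) = ⋯ = f_m(x) = 0}. -/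
open MvPolynomial

namespace SkolemAux

noncomputable section

variable (r d : ℕ)

/-- exponent vectors -/
abbrev E := Fin r → Fin (d + 1)
/-- variable set: original vars, one var per exponent vector, one extra var -/
abbrev V := Fin r ⊕ ((Fin r → Fin (d + 1)) ⊕ Unit)

def zv : V r d := Sum.inr (Sum.inr ())

def pick (e : E r d) (h : e ≠ 0) : Fin r := (Function.ne_iff.mp h).choose

lemma pick_spec (e : E r d) (h : e ≠ 0) : e (pick r d e h) ≠ 0 :=
  (Function.ne_iff.mp h).choose_spec

def pred (e : E r d) (j : Fin r) : E r d :=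
  fun j' => if j' = j then ⟨(e j : ℕ) - 1, by have := (e j).isLt; omega⟩ else e j'

def W (e : E r d) : MvPolynomial (V r d) ℚ := X (Sum.inr (Sum.inl e))

def XV (j : Fin r) : MvPolynomial (V r d) ℚ := X (Sum.inl j)

def Rel (e : E r d) : MvPolynomial (V r d) ℚ :=
  if h : e = 0 then W r d e - 1
  else W r d e - W r d (pred r d e (pick r d e h)) * XV r d (pick r d e h)

lemma prod_pred (x : Fin r → ℚ) (e : E r d) (j : Fin r) (hj : e j ≠ 0) :
    (∏ j', x j' ^ (e j' : ℕ)) = (∏ j', x j' ^ ((pred r d e j) j' : ℕ)) * x j := by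
  have key : ∀ j', x j' ^ (e j' : ℕ)
      = x j' ^ ((pred r d e j) j' : ℕ) * (if j' = j then x j' else 1) := by
    intro j'
    by_cases h : j' = j
    · subst h
      have hp : (((pred r d e j') j' : Fin (d+1)) : ℕ) = (e j' : ℕ) - 1 := by
        simp [pred]
      have h1 : (e j' : ℕ) ≠ 0 := fun h0 => hj (Fin.ext h0)
      rw [if_pos rfl, hp]
      conv_lhs => rw [show (e j' : ℕ) = ((e j' : ℕ) - 1) + 1 by omega]
      rw [pow_succ]
    · simp [pred, h]
  rw [Finset.prod_congr rfl (fun j' _ => key j'), Finset.prod_mul_distrib,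
    Finset.prod_ite_eq' Finset.univ j x, if_pos (Finset.mem_univ j)]

lemma sum_pred (e : E r d) (j : Fin r) (hj : e j ≠ 0) :
    (∑ j', ((pred r d e j) j' : ℕ)) + 1 = ∑ j', (e j' : ℕ) := by
  have key : ∀ j', (e j' : ℕ) = ((pred r d e j) j' : ℕ) + (if j' = j then 1 else 0) := by
    intro j'
    by_cases h : j' = j
    · subst h
      have h1 : (e j' : ℕ) ≠ 0 := fun h0 => hj (Fin.ext h0)
      have hp : (((pred r d e j') j' : Fin (d+1)) : ℕ) = (e j' : ℕ) - 1 := by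
        simp [pred]
      rw [if_pos rfl, hp]
      omega
    · simp [pred, h]
  rw [Finset.sum_congr rfl (fun j' _ => key j'), Finset.sum_add_distrib,
    Finset.sum_ite_eq' Finset.univ j (fun _ => 1), if_pos (Finset.mem_univ j)]

/-- an assignment satisfying all relations has determined `W` values -/
lemma w_eq (y : V r d → ℚ) (hR : ∀ e, eval y (Rel r d e) = 0) (e : E r d) :
    y (Sum.inr (Sum.inl e)) = ∏ j, y (Sum.inl j) ^ (e j : ℕ) := by
  set x : Fin r → ℚ := fun j => y (Sum.inl j) with hx
  suffices H : ∀ N : ℕ, ∀ e : E r d, (∑ j, (e j : ℕ)) ≤ N →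
      y (Sum.inr (Sum.inl e)) = ∏ j, x j ^ (e j : ℕ) from H _ e le_rfl
  intro N
  induction N with
  | zero =>
    intro e he
    have he0 : e = 0 := by
      funext j
      have h0 := Finset.sum_eq_zero_iff.mp (Nat.le_zero.mp he) j (Finset.mem_univ j)
      exact Fin.ext h0
    have := hR e
    rw [Rel, dif_pos he0] at this
    simp only [W, map_sub, eval_X, map_one, sub_eq_zero] at this
    rw [this, he0]
    simp
  | succ N ih =>
    intro e he
    by_cases h0 : e = 0
    · have := hR e
      rw [Rel, dif_pos h0] at this
      simp only [W, map_sub, eval_X, map_one, sub_eq_zero] at this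
      rw [this, h0]
      simp
    · set j := pick r d e h0 with hj
      have hjne : e j ≠ 0 := pick_spec r d e h0
      have hrel := hR e
      rw [Rel, dif_neg h0] at hrel
      simp only [W, XV, map_sub, map_mul, eval_X, sub_eq_zero] at hrel
      have hsum : (∑ j', ((pred r d e j) j' : ℕ)) ≤ N := by
        have := sum_pred r d e j hjne
        omega
      rw [hrel, ih _ hsum, ← prod_pred r d x e j hjne]

/-- if the `W` values are the monomial values, all relations vanish -/
lemma rel_eval_zero (y : V r d → ℚ)
    (hw : ∀ e : E r d, y (Sum.inr (Sum.inl e)) = ∏ j, y (Sum.inl j) ^ (e j : ℕ))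
    (e : E r d) : eval y (Rel r d e) = 0 := by
  by_cases h0 : e = 0
  · rw [Rel, dif_pos h0]
    simp [W, hw, h0]
  · rw [Rel, dif_neg h0]
    simp only [W, XV, map_sub, map_mul, eval_X, sub_eq_zero]
    rw [hw, hw, ← prod_pred r d _ e _ (pick_spec r d e h0)]

def ec (α : Fin r →₀ ℕ) : E r d := fun j => ⟨min (α j) d, by omega⟩

def lift (f : MvPolynomial (Fin r) ℚ) : MvPolynomial (V r d) ℚ :=
  ∑ α ∈ f.support, C (f.coeff α) * W r d (ec r d α)

lemma exp_le {f : MvPolynomial (Fin r) ℚ} (hf : f.totalDegree ≤ d)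
    {α : Fin r →₀ ℕ} (hα : α ∈ f.support) (j : Fin r) : α j ≤ d := by
  have h1 : α.sum (fun _ e => e) ≤ f.totalDegree := le_totalDegree hα
  have h2 : α j ≤ α.sum (fun _ e => e) := by
    by_cases h : α j = 0
    · omega
    · rw [Finsupp.sum]
      exact Finset.single_le_sum (fun _ _ => Nat.zero_le _)
        (Finsupp.mem_support_iff.mpr h)
  omega

lemma lift_eval (y : V r d → ℚ)
    (hw : ∀ e : E r d, y (Sum.inr (Sum.inl e)) = ∏ j, y (Sum.inl j) ^ (e j : ℕ))
    {f : MvPolynomial (Fin r) ℚ} (hf : f.totalDegree ≤ d) :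
    eval y (lift r d f) = eval (fun j => y (Sum.inl j)) f := by
  rw [lift, map_sum]
  conv_rhs => rw [eval_eq']
  refine Finset.sum_congr rfl fun α hα => ?_
  rw [map_mul, eval_C, W, eval_X, hw]
  congr 1
  refine Finset.prod_congr rfl fun j _ => ?_
  congr 1
  simp only [ec]
  exact Nat.min_eq_left (exp_le r d hf hα j)

def G (m : ℕ) (f : Fin m → MvPolynomial (Fin r) ℚ) : MvPolynomial (V r d) ℚ :=
  X (zv r d) ^ 4 + ((∑ i, lift r d (f i) ^ 2) + (∑ e : E r d, Rel r d e ^ 2))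

lemma rel_deg (e : E r d) : (Rel r d e).totalDegree ≤ 2 := by
  rw [Rel]
  split
  · refine le_trans (totalDegree_sub_C_le _ _) ?_
    simp [W, totalDegree_X]
  · rw [sub_eq_add_neg]
    refine le_trans (totalDegree_add _ _) (max_le ?_ ?_)
    · simp [W, totalDegree_X]
    · rw [totalDegree_neg]
      refine le_trans (totalDegree_mul _ _) ?_
      simp [W, XV, totalDegree_X]

lemma lift_deg (f : MvPolynomial (Fin r) ℚ) : (lift r d f).totalDegree ≤ 1 := by
  refine le_trans (totalDegree_finset_sum _ _) (Finset.sup_le fun α _ => ?_)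
  refine le_trans (totalDegree_mul _ _) ?_
  simp [W, totalDegree_X, totalDegree_C]

lemma G_deg (m : ℕ) (f : Fin m → MvPolynomial (Fin r) ℚ) :
    (G r d m f).totalDegree = 4 := by
  have hle : (G r d m f).totalDegree ≤ 4 := by
    rw [G]
    refine le_trans (totalDegree_add _ _) (max_le ?_ (le_trans (totalDegree_add _ _)
      (max_le ?_ ?_)))
    · refine le_trans (totalDegree_pow _ _) ?_
      simp [totalDegree_X]
    · refine le_trans (totalDegree_finset_sum _ _) (Finset.sup_le fun i _ => ?_)
      refine le_trans (totalDegree_pow _ _) ?_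
      have := lift_deg r d (f i)
      omega
    · refine le_trans (totalDegree_finset_sum _ _) (Finset.sup_le fun e _ => ?_)
      refine le_trans (totalDegree_pow _ _) ?_
      have := rel_deg r d e
      omega
  have hrest : ((∑ i, lift r d (f i) ^ 2) + (∑ e : E r d, Rel r d e ^ 2)) ∈
      supported ℚ {v : V r d | v ≠ zv r d} := by
    refine Subalgebra.add_mem _ (Subalgebra.sum_mem _ fun i _ => ?_)
      (Subalgebra.sum_mem _ fun e _ => ?_)
    · refine pow_mem ?_ 2
      rw [lift]
      refine Subalgebra.sum_mem _ fun α _ => ?_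
      refine Subalgebra.mul_mem _ ?_ ?_
      · exact Subalgebra.algebraMap_mem _ _
      · rw [W]
        refine (X_mem_supported).mpr ?_
        simp [zv]
    · refine pow_mem ?_ 2
      rw [Rel]
      split
      · refine Subalgebra.sub_mem _ ?_ (Subalgebra.one_mem _)
        rw [W]; refine (X_mem_supported).mpr ?_; simp [zv]
      · refine Subalgebra.sub_mem _ ?_ (Subalgebra.mul_mem _ ?_ ?_) <;>
          first
          | (rw [W]; refine (X_mem_supported).mpr ?_; simp [zv])
          | (rw [XV]; refine (X_mem_supported).mpr ?_; simp [zv])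
  have hvars := (mem_supported).mp hrest
  have hcoeff : coeff (Finsupp.single (zv r d) 4) (G r d m f) = 1 := by
    rw [G, coeff_add]
    have h1 : coeff (Finsupp.single (zv r d) 4) (X (zv r d) ^ 4 : MvPolynomial (V r d) ℚ)
        = 1 := by
      rw [coeff_X_pow]
      simp
    have h2 : coeff (Finsupp.single (zv r d) 4)
        ((∑ i, lift r d (f i) ^ 2) + (∑ e : E r d, Rel r d e ^ 2)) = 0 := by
      by_contra h
      have hmem : Finsupp.single (zv r d) 4 ∈
          ((∑ i, lift r d (f i) ^ 2) + (∑ e : E r d, Rel r d e ^ 2)).support :=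
        mem_support_iff.mpr h
      have hz : zv r d ∈ ((∑ i, lift r d (f i) ^ 2)
          + (∑ e : E r d, Rel r d e ^ 2)).vars := by
        rw [mem_vars]
        exact ⟨_, hmem, by simp⟩
      exact (hvars hz) rfl
    rw [h1, h2, add_zero]
  have hge : 4 ≤ (G r d m f).totalDegree := by
    have := le_totalDegree (p := G r d m f) (mem_support_iff.mpr (by rw [hcoeff]; norm_num))
    rwa [Finsupp.sum_single_index rfl] at this
  omega

lemma eval_G_eq_zero_iff (m : ℕ) (f : Fin m → MvPolynomial (Fin r) ℚ) (y : V r d → ℚ) :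
    eval y (G r d m f) = 0 ↔
      (y (zv r d) = 0 ∧ (∀ i, eval y (lift r d (f i)) = 0) ∧
        ∀ e : E r d, eval y (Rel r d e) = 0) := by
  rw [G]
  simp only [map_add, map_pow, eval_X, map_sum]
  constructor
  · intro h
    have ha : (0:ℚ) ≤ y (zv r d) ^ 4 := by positivity
    have hb : (0:ℚ) ≤ ∑ i, eval y (lift r d (f i)) ^ 2 :=
      Finset.sum_nonneg fun i _ => sq_nonneg _
    have hc : (0:ℚ) ≤ ∑ e : E r d, eval y (Rel r d e) ^ 2 :=
      Finset.sum_nonneg fun e _ => sq_nonneg _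
    have h1 : y (zv r d) ^ 4 = 0 := by linarith
    have h2 : ∑ i, eval y (lift r d (f i)) ^ 2 = 0 := by linarith
    have h3 : ∑ e : E r d, eval y (Rel r d e) ^ 2 = 0 := by linarith
    refine ⟨by exact pow_eq_zero_iff (by norm_num) |>.mp h1, fun i => ?_, fun e => ?_⟩
    · have := (Finset.sum_eq_zero_iff_of_nonneg (fun i _ => sq_nonneg
        (eval y (lift r d (f i))))).mp h2 i (Finset.mem_univ i)
      exact pow_eq_zero_iff (by norm_num) |>.mp this
    · have := (Finset.sum_eq_zero_iff_of_nonneg (fun e _ => sq_nonneg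
        (eval y (Rel r d e)))).mp h3 e (Finset.mem_univ e)
      exact pow_eq_zero_iff (by norm_num) |>.mp this
  · rintro ⟨h1, h2, h3⟩
    simp [h1, h2, h3]

/-- the main bijection, on the `V`-indexed side -/
lemma bijOn_V (m : ℕ) (f : Fin m → MvPolynomial (Fin r) ℚ)
    (hf : ∀ i, (f i).totalDegree ≤ d) :
    Set.BijOn (fun (y : V r d → ℚ) (i : Fin r) => y (Sum.inl i))
      {y : V r d → ℚ | eval y (G r d m f) = 0}
      {x : Fin r → ℚ | ∀ i, eval x (f i) = 0} := by
  constructor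
  · -- MapsTo
    intro y hy
    rw [Set.mem_setOf_eq, eval_G_eq_zero_iff] at hy
    obtain ⟨hz, hl, hr⟩ := hy
    intro i
    rw [← lift_eval r d y (w_eq r d y hr) (hf i)]
    exact hl i
  refine ⟨?_, ?_⟩
  · -- InjOn
    intro y1 h1 y2 h2 hxy
    have hxy' : ∀ j : Fin r, y1 (Sum.inl j) = y2 (Sum.inl j) := fun j => congrFun hxy j
    rw [Set.mem_setOf_eq, eval_G_eq_zero_iff] at h1 h2
    funext v
    match v with
    | Sum.inl j => exact hxy' j
    | Sum.inr (Sum.inl e) =>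
      rw [w_eq r d y1 h1.2.2 e, w_eq r d y2 h2.2.2 e]
      refine Finset.prod_congr rfl fun j _ => ?_
      rw [hxy' j]
    | Sum.inr (Sum.inr ()) =>
      have e1 := h1.1
      have e2 := h2.1
      simp only [zv] at e1 e2
      rw [e1, e2]
  · -- SurjOn
    intro x hx
    set y : V r d → ℚ :=
      Sum.elim x (Sum.elim (fun e => ∏ j, x j ^ (e j : ℕ)) (fun _ => 0)) with hy
    have hw : ∀ e : E r d, y (Sum.inr (Sum.inl e)) = ∏ j, y (Sum.inl j) ^ (e j : ℕ) := by
      intro e; simp [hy]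
    refine ⟨y, ?_, ?_⟩
    · rw [Set.mem_setOf_eq, eval_G_eq_zero_iff]
      refine ⟨by simp [hy, zv], fun i => ?_, rel_eval_zero r d y hw⟩
      rw [lift_eval r d y hw (hf i)]
      have : (fun j => y (Sum.inl j)) = x := by funext j; simp [hy]
      rw [this]
      exact hx i
    · funext j; simp [hy]

end

end SkolemAux

open SkolemAux in
/-- **Key technical step (Skolem's trick + sum of squares + fourth power).**
Every system of `m` polynomials of total degree at most `d` in `r` variables over `ℚ`
is equivalent to a single polynomial equation of total degree exactly `4` in `n`
variables, where `n` depends only on `r`, `m`, `d`; the projection onto the first `r`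
coordinates is a bijection between the solution sets. -/
theorem system_equiv_degree_four_hypersurface
    (r m d : ℕ) :
    ∃ (n : ℕ) (hn : r ≤ n), ∀ f : Fin m → MvPolynomial (Fin r) ℚ,
      (∀ i, (f i).totalDegree ≤ d) →
      ∃ g : MvPolynomial (Fin n) ℚ, g.totalDegree = 4 ∧
        Set.BijOn (fun (y : Fin n → ℚ) (i : Fin r) => y (Fin.castLE hn i))
          {y : Fin n → ℚ | eval y g = 0}
          {x : Fin r → ℚ | ∀ i, eval x (f i) = 0} := by
  classical
  set N := Fintype.card (((Fin r → Fin (d + 1)) ⊕ Unit)) with hN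
  refine ⟨r + N, Nat.le_add_right r N, fun f hf => ?_⟩
  set τ : ((Fin r → Fin (d + 1)) ⊕ Unit) ≃ Fin N := Fintype.equivFin _ with hτ
  set σ : V r d ≃ Fin (r + N) :=
    ((Equiv.refl (Fin r)).sumCongr τ).trans finSumFinEquiv with hσ
  have hσl : ∀ i : Fin r, σ (Sum.inl i) = Fin.castLE (Nat.le_add_right r N) i := by
    intro i
    apply Fin.ext
    simp [hσ, finSumFinEquiv_apply_left]
  refine ⟨rename σ (G r d m f), ?_, ?_⟩
  · have h1 : (rename σ (G r d m f)).totalDegree ≤ (G r d m f).totalDegree :=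
      totalDegree_rename_le σ _
    have h2 : (G r d m f).totalDegree ≤ (rename σ (G r d m f)).totalDegree := by
      have : rename (σ.symm : Fin (r + N) → V r d) (rename σ (G r d m f)) = G r d m f := by
        rw [rename_rename]
        have : (σ.symm : Fin (r + N) → V r d) ∘ σ = id := by
          funext v; simp
        rw [this, rename_id, AlgHom.id_apply]
      calc (G r d m f).totalDegree
          = (rename (σ.symm : Fin (r + N) → V r d) (rename σ (G r d m f))).totalDegree := by
            rw [this]
        _ ≤ (rename σ (G r d m f)).totalDegree := totalDegree_rename_le _ _
    rw [G_deg r d m f] at *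
    omega
  · have hb := bijOn_V r d m f hf
    set P : (Fin (r + N) → ℚ) → (V r d → ℚ) := fun y => y ∘ σ with hP
    have hPbij : Set.BijOn P ({y : Fin (r + N) → ℚ | eval y (rename σ (G r d m f)) = 0})
        ({z : V r d → ℚ | eval z (G r d m f) = 0}) := by
      refine ⟨fun y hy => ?_, fun y1 _ y2 _ h => ?_, fun z hz => ?_⟩
      · rw [Set.mem_setOf_eq, eval_rename] at hy
        exact hy
      · funext v
        have := congrFun h (σ.symm v)
        simpa [hP] using this
      · refine ⟨z ∘ σ.symm, ?_, ?_⟩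
        · rw [Set.mem_setOf_eq, eval_rename]
          have : (z ∘ σ.symm) ∘ σ = z := by funext v; simp
          rw [this]
          exact hz
        · funext v; simp [hP]
    have hcomp : (fun (y : Fin (r + N) → ℚ) (i : Fin r) =>
        y (Fin.castLE (Nat.le_add_right r N) i))
        = (fun (z : V r d → ℚ) (i : Fin r) => z (Sum.inl i)) ∘ P := by
      funext y
      funext i
      simp only [hP, Function.comp]
      rw [hσl i]
    rw [hcomp]
    exact hb.comp hPbij
end

section
/- For every affine scheme X of finite type over ℚ there exist a natural number n and a polynomial g ∈ ℚ[x_1,…,x_n] of total degree exactly 4 such that there is a bijection between the set of ℚ-points X(ℚ) (i.e., ℚ-morphisms Spec ℚ → X) and the set {y ∈ ℚ^n : g(y) = 0}. -/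
open AlgebraicGeometry CategoryTheory MvPolynomial

namespace Deg4Red

open Finset


variable {m k D : ℕ}

/-- Bounded exponent vectors, indexing the new variables. -/
abbrev Idx (m D : ℕ) := Fin m → Fin (D + 2)

variable (m D) in
def zeroIdx : Idx m D := fun _ => 0

def eIdx (i : Fin m) : Idx m D := fun j => if j = i then ⟨1, by omega⟩ else 0

def decIdx (α : Idx m D) (i : Fin m) : Idx m D :=
  fun j => if j = i then ⟨(α i : ℕ) - 1, lt_of_le_of_lt (Nat.sub_le _ _) (α i).isLt⟩ else α j

def wt (α : Idx m D) : ℕ := ∑ i, (α i : ℕ)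

def mono (y : Fin m → ℚ) (α : Idx m D) : ℚ := ∏ i, y i ^ (α i : ℕ)

abbrev V (m D : ℕ) := Idx m D ⊕ Fin 2

def emb (d : Fin m →₀ ℕ) : Idx m D := fun i => ⟨min (d i) (D + 1), by omega⟩

noncomputable def linL (p : MvPolynomial (Fin m) ℚ) : MvPolynomial (Idx m D) ℚ :=
  ∑ d ∈ p.support, C (coeff d p) * X (emb d)

abbrev LIdx (m k D : ℕ) := (Idx m D × Fin m) ⊕ (Fin k ⊕ Fin 1)

noncomputable def relL (f : Fin k → MvPolynomial (Fin m) ℚ) : LIdx m k D → MvPolynomial (Idx m D) ℚ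
  | .inl (α, i) => if (α i : ℕ) = 0 then 0 else X α - X (eIdx i) * X (decIdx α i)
  | .inr (.inl j) => linL (f j)
  | .inr (.inr _) => X (zeroIdx m D) - 1

abbrev RIdx (m k D : ℕ) := LIdx m k D ⊕ Fin 2

noncomputable def rel (f : Fin k → MvPolynomial (Fin m) ℚ) : RIdx m k D → MvPolynomial (V m D) ℚ
  | .inl t => rename Sum.inl (relL f t)
  | .inr t => if t = 0 then X (.inr 0) else X (.inr 1) - X (.inr 0) ^ 2

noncomputable def gpoly (f : Fin k → MvPolynomial (Fin m) ℚ) : MvPolynomial (V m D) ℚ :=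
  ∑ t : RIdx m k D, rel f t ^ 2

/-! ### basic lemmas -/

lemma mono_zeroIdx (y : Fin m → ℚ) : mono y (zeroIdx m D) = 1 := by
  simp [mono, zeroIdx]

lemma mono_eIdx (y : Fin m → ℚ) (i : Fin m) : mono y (eIdx (D := D) i) = y i := by
  unfold mono eIdx
  rw [Finset.prod_eq_single i]
  · simp
  · intro j _ hj; simp [hj]
  · simp

lemma decIdx_self (α : Idx m D) (i : Fin m) :
    ((decIdx α i i : Fin (D+2)) : ℕ) = (α i : ℕ) - 1 := by
  simp [decIdx]

lemma decIdx_ne (α : Idx m D) (i j : Fin m) (hj : j ≠ i) : decIdx α i j = α j := by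
  simp [decIdx, hj]

lemma wt_decIdx (α : Idx m D) (i : Fin m) (h : (α i : ℕ) ≠ 0) :
    wt α = wt (decIdx α i) + 1 := by
  unfold wt
  rw [← Finset.sum_erase_add _ _ (mem_univ i), ← Finset.sum_erase_add _ (fun j => ((decIdx α i j : Fin (D+2)) : ℕ)) (mem_univ i)]
  have h1 : ∑ j ∈ univ.erase i, ((α j : ℕ)) = ∑ j ∈ univ.erase i, ((decIdx α i j : Fin (D+2)) : ℕ) := by
    refine Finset.sum_congr rfl fun j hj => ?_
    rw [decIdx_ne α i j (Finset.mem_erase.mp hj).1]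
  rw [← h1, decIdx_self]
  omega

lemma mono_decIdx (y : Fin m → ℚ) (α : Idx m D) (i : Fin m) (h : (α i : ℕ) ≠ 0) :
    mono y α = y i * mono y (decIdx α i) := by
  unfold mono
  rw [← Finset.prod_erase_mul _ _ (mem_univ i), ← Finset.prod_erase_mul _ (fun j => y j ^ ((decIdx α i j : Fin (D+2)) : ℕ)) (mem_univ i)]
  have h1 : ∏ j ∈ univ.erase i, y j ^ ((α j : ℕ)) = ∏ j ∈ univ.erase i, y j ^ ((decIdx α i j : Fin (D+2)) : ℕ) := by
    refine Finset.prod_congr rfl fun j hj => ?_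
    rw [decIdx_ne α i j (Finset.mem_erase.mp hj).1]
  rw [← h1, decIdx_self]
  conv_lhs => rw [show (α i : ℕ) = ((α i : ℕ) - 1) + 1 by omega]
  rw [pow_succ]
  ring

lemma exps_le {p : MvPolynomial (Fin m) ℚ} (hp : p.totalDegree ≤ D) {d : Fin m →₀ ℕ}
    (hd : d ∈ p.support) (i : Fin m) : d i ≤ D + 1 := by
  by_cases h : d i = 0
  · omega
  · have h1 : d i ≤ d.sum fun _ e => e := by
      rw [Finsupp.sum]
      exact Finset.single_le_sum (f := fun a => d a) (fun _ _ => Nat.zero_le _)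
        (Finsupp.mem_support_iff.mpr h)
    have h2 := le_totalDegree hd
    omega

lemma mono_emb (y : Fin m → ℚ) {p : MvPolynomial (Fin m) ℚ} (hp : p.totalDegree ≤ D)
    {d : Fin m →₀ ℕ} (hd : d ∈ p.support) :
    mono y (emb (D := D) d) = ∏ i, y i ^ d i := by
  unfold mono emb
  refine Finset.prod_congr rfl fun i _ => ?_
  simp [min_eq_left (exps_le hp hd i)]

lemma eval_linL (w : Idx m D → ℚ) (p : MvPolynomial (Fin m) ℚ) :
    eval w (linL p) = ∑ d ∈ p.support, coeff d p * w (emb d) := by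
  simp [linL]

lemma eval_linL_eq (w : Idx m D → ℚ) (p : MvPolynomial (Fin m) ℚ) (hp : p.totalDegree ≤ D)
    (y : Fin m → ℚ) (hw : ∀ d ∈ p.support, w (emb d) = mono y (emb (D := D) d)) :
    eval w (linL p) = eval y p := by
  rw [eval_linL, eval_eq']
  refine Finset.sum_congr rfl fun d hd => ?_
  rw [hw d hd, mono_emb y hp hd]

/-! ### degree -/

lemma relL_totalDegree (f : Fin k → MvPolynomial (Fin m) ℚ) (t : LIdx m k D) :
    (relL f t).totalDegree ≤ 2 := by
  rcases t with ⟨α, i⟩ | j | t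
  · show (if (α i : ℕ) = 0 then 0 else X α - X (eIdx i) * X (decIdx α i) :
      MvPolynomial (Idx m D) ℚ).totalDegree ≤ 2
    split
    · simp
    · refine le_trans (totalDegree_sub _ _) (max_le (by simp [totalDegree_X]) ?_)
      refine le_trans (totalDegree_mul _ _) ?_
      simp [totalDegree_X]
  · show (linL (f j)).totalDegree ≤ 2
    refine le_trans (totalDegree_finset_sum _ _) (Finset.sup_le fun d _ => ?_)
    refine le_trans (totalDegree_mul _ _) ?_
    simp [totalDegree_X, totalDegree_C]
  · show (X (zeroIdx m D) - 1 : MvPolynomial (Idx m D) ℚ).totalDegree ≤ 2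
    refine le_trans (totalDegree_sub _ _) (max_le (by simp [totalDegree_X]) (by simp))

lemma rel_totalDegree (f : Fin k → MvPolynomial (Fin m) ℚ) (t : RIdx m k D) :
    (rel f t).totalDegree ≤ 2 := by
  rcases t with t | t
  · exact le_trans (totalDegree_rename_le _ _) (relL_totalDegree f t)
  · rw [rel]
    split
    · simp [totalDegree_X]
    · refine le_trans (totalDegree_sub _ _) (max_le (by simp [totalDegree_X]) ?_)
      refine le_trans (totalDegree_pow _ _) (by simp [totalDegree_X])

lemma gpoly_totalDegree_le (f : Fin k → MvPolynomial (Fin m) ℚ) :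
    (gpoly (D := D) f).totalDegree ≤ 4 := by
  refine le_trans (totalDegree_finset_sum _ _) (Finset.sup_le fun t _ => ?_)
  refine le_trans (totalDegree_pow _ _) ?_
  have := rel_totalDegree f t
  omega

lemma coeff_u4_renamed (q : MvPolynomial (Idx m D) ℚ) :
    coeff (Finsupp.single (Sum.inr (0 : Fin 2)) 4) (rename Sum.inl q) = 0 := by
  by_contra hc
  obtain ⟨u, hu, -⟩ := coeff_rename_ne_zero _ _ _ hc
  have h2 := Finsupp.mapDomain_notin_range (f := (Sum.inl : Idx m D → V m D)) u
    (Sum.inr 0) (by simp)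
  rw [hu] at h2
  simp at h2

lemma coeff_u4_gpoly (f : Fin k → MvPolynomial (Fin m) ℚ) :
    coeff (Finsupp.single (Sum.inr (0 : Fin 2)) 4) (gpoly (D := D) f) = 1 := by
  unfold gpoly
  rw [coeff_sum, Fintype.sum_sum_type]
  have h1 : ∀ t : LIdx m k D,
      coeff (Finsupp.single (Sum.inr (0 : Fin 2)) 4) (rel f (.inl t) ^ 2) = 0 := by
    intro t
    have : rel f (Sum.inl t) ^ 2 = rename Sum.inl (relL f t ^ 2) := by
      rw [map_pow]; rfl
    rw [this]
    exact coeff_u4_renamed _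
  rw [Finset.sum_eq_zero (fun t _ => h1 t), Fin.sum_univ_two]
  have e0 : rel (D := D) f (.inr 0) = X (.inr 0) := by rw [rel]; exact if_pos rfl
  have e1 : rel (D := D) f (.inr 1) = X (.inr 1) - X (.inr 0) ^ 2 := by
    rw [rel]; exact if_neg (by decide)
  rw [e0, e1]
  have hexp : (X (Sum.inr 1) - X (Sum.inr 0) ^ 2 : MvPolynomial (V m D) ℚ) ^ 2 =
      X (Sum.inr 1) ^ 2 -
        (X (Sum.inr 1) * X (Sum.inr 0) ^ 2 + X (Sum.inr 1) * X (Sum.inr 0) ^ 2) +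
        X (Sum.inr 0) ^ 4 := by ring
  rw [hexp]
  simp [coeff_add, coeff_sub, coeff_X_pow, coeff_X_mul', Finsupp.single_eq_single_iff,
    Finsupp.single_apply]

/-! ### solutions -/

lemma eval_gpoly_eq_zero_iff (f : Fin k → MvPolynomial (Fin m) ℚ) (z : V m D → ℚ) :
    eval z (gpoly (D := D) f) = 0 ↔ ∀ t, eval z (rel f t) = 0 := by
  unfold gpoly
  rw [map_sum]
  simp_rw [map_pow]
  rw [Finset.sum_eq_zero_iff_of_nonneg (fun t _ => sq_nonneg _)]
  constructor
  · intro h t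
    exact pow_eq_zero_iff (two_ne_zero) |>.mp (h t (mem_univ t))
  · intro h t _
    rw [h t]; ring

def zlift (y : Fin m → ℚ) : V m D → ℚ := Sum.elim (mono y) (fun _ => 0)

variable {f : Fin k → MvPolynomial (Fin m) ℚ}

lemma zlift_rel_eq_zero (hf : ∀ j, (f j).totalDegree ≤ D) {y : Fin m → ℚ}
    (hy : ∀ j, eval y (f j) = 0) (t : RIdx m k D) :
    eval (zlift (D := D) y) (rel f t) = 0 := by
  rcases t with t | t
  · rw [rel, eval_rename]
    have hcomp : zlift (D := D) y ∘ Sum.inl = mono y := rfl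
    rw [hcomp]
    rcases t with ⟨α, i⟩ | j | t
    · rw [relL]
      split
      · simp
      · next h =>
        simp only [map_sub, map_mul, eval_X]
        rw [mono_eIdx, ← mono_decIdx y α i h, sub_self]
    · rw [relL, eval_linL_eq (mono y) (f j) (hf j) y (fun d _ => rfl)]
      exact hy j
    · rw [relL]
      simp only [map_sub, map_one, eval_X]
      rw [mono_zeroIdx, sub_self]
  · rw [rel]
    split
    · simp [zlift]
    · simp [zlift]

lemma master (hf : ∀ j, (f j).totalDegree ≤ D) {z : V m D → ℚ}
    (hz : ∀ t, eval z (rel f t) = 0) :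
    (∀ α, z (.inl α) = mono (fun i => z (.inl (eIdx i))) α) ∧
    ((∀ j, eval (fun i => z (.inl (eIdx i))) (f j) = 0) ∧
    z (.inr 0) = 0 ∧ z (.inr 1) = 0) := by
  set y : Fin m → ℚ := fun i => z (.inl (eIdx (D := D) i)) with hy
  have hrelL : ∀ t, eval (z ∘ Sum.inl) (relL (D := D) f t) = 0 := by
    intro t
    have := hz (.inl t)
    rwa [rel, eval_rename] at this
  have key : ∀ n (α : Idx m D), wt α = n → z (.inl α) = mono y α := by
    intro n
    induction n using Nat.strong_induction_on with
    | _ n ih =>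
      intro α hα
      by_cases h0 : ∀ i, (α i : ℕ) = 0
      · have hzeq : α = zeroIdx m D := funext fun j => Fin.ext (h0 j)
        rw [hzeq, mono_zeroIdx]
        have hr := hrelL (.inr (.inr 0))
        rw [relL] at hr
        simp only [map_sub, map_one, eval_X, Function.comp_apply] at hr
        linarith
      · push_neg at h0
        obtain ⟨i, hi⟩ := h0
        have hrel := hrelL (.inl (α, i))
        rw [relL, if_neg hi] at hrel
        simp only [map_sub, map_mul, eval_X, Function.comp_apply] at hrel
        have hwt := wt_decIdx α i hi
        have hdec : z (.inl (decIdx α i)) = mono y (decIdx α i) :=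
          ih (wt (decIdx α i)) (by omega) _ rfl
        have hze : z (.inl α) = y i * mono y (decIdx α i) := by
          have h2 := sub_eq_zero.mp hrel
          rw [h2, hdec]
        rw [hze, ← mono_decIdx y α i hi]
  refine ⟨fun α => key (wt α) α rfl, fun j => ?_, ?_, ?_⟩
  · have hr := hrelL (.inr (.inl j))
    rw [relL, eval_linL_eq (z ∘ Sum.inl) (f j) (hf j) y
      (fun d _ => key (wt (emb d)) (emb d) rfl)] at hr
    exact hr
  · have hr := hz (.inr 0)
    rw [rel, if_pos rfl] at hr
    simpa using hr
  · have h0 : z (.inr 0) = 0 := by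
      have hr := hz (.inr 0)
      rw [rel, if_pos rfl] at hr
      simpa using hr
    have hr := hz (.inr 1)
    rw [rel, if_neg (by decide)] at hr
    simp only [map_sub, map_pow, eval_X] at hr
    rw [h0] at hr
    simpa using hr

noncomputable def coreEquiv (hf : ∀ j, (f j).totalDegree ≤ D) :
    {y : Fin m → ℚ // ∀ j, eval y (f j) = 0} ≃
      {z : V m D → ℚ // eval z (gpoly (D := D) f) = 0} where
  toFun y := ⟨zlift y.1, (eval_gpoly_eq_zero_iff f _).mpr (zlift_rel_eq_zero hf y.2)⟩
  invFun z := ⟨fun i => z.1 (.inl (eIdx i)),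
    ((master hf ((eval_gpoly_eq_zero_iff f _).mp z.2)).2).1⟩
  left_inv y := by
    apply Subtype.ext
    funext i
    show zlift y.1 (.inl (eIdx i)) = y.1 i
    show mono y.1 (eIdx i) = y.1 i
    exact mono_eIdx y.1 i
  right_inv z := by
    obtain ⟨hm, -, h0, h1⟩ := master hf ((eval_gpoly_eq_zero_iff f _).mp z.2)
    apply Subtype.ext
    funext v
    rcases v with α | b
    · exact (hm α).symm
    · fin_cases b
      · exact h0.symm
      · exact h1.symm

theorem core (m k : ℕ) (f : Fin k → MvPolynomial (Fin m) ℚ) :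
    ∃ (n : ℕ) (g : MvPolynomial (Fin n) ℚ), g.totalDegree = 4 ∧
      Nonempty ({y : Fin m → ℚ // ∀ j, eval y (f j) = 0} ≃
        {y : Fin n → ℚ // eval y g = 0}) := by
  set D := Finset.univ.sup (fun j => (f j).totalDegree) with hDdef
  have hf : ∀ j, (f j).totalDegree ≤ D := fun j => by
    rw [hDdef]
    exact Finset.le_sup (f := fun j => (f j).totalDegree) (mem_univ j)
  set n := Fintype.card (V m D) with hn
  set e : V m D ≃ Fin n := Fintype.equivFin (V m D) with he
  have hle : (gpoly (D := D) f).totalDegree = 4 := by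
    refine le_antisymm (gpoly_totalDegree_le f) ?_
    have hc := coeff_u4_gpoly (D := D) f
    have hmem : Finsupp.single (Sum.inr (0 : Fin 2)) 4 ∈ (gpoly (D := D) f).support :=
      mem_support_iff.mpr (by rw [hc]; norm_num)
    have h4 := le_totalDegree hmem
    rwa [Finsupp.sum_single_index rfl] at h4
  have hback : gpoly (D := D) f = rename e.symm (rename e (gpoly (D := D) f)) := by
    rw [rename_rename, Equiv.symm_comp_self, rename_id, AlgHom.id_apply]
  refine ⟨n, rename e (gpoly (D := D) f), ?_, ?_⟩
  · refine le_antisymm ?_ ?_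
    · rw [← hle]; exact totalDegree_rename_le _ _
    · rw [← hle]
      conv_lhs => rw [hback]
      exact totalDegree_rename_le _ _
  · refine ⟨(coreEquiv hf).trans ?_⟩
    refine ⟨fun z => ⟨z.1 ∘ e.symm, ?_⟩, fun y => ⟨y.1 ∘ e, ?_⟩, ?_, ?_⟩
    · rw [eval_rename, show (z.1 ∘ e.symm) ∘ e = z.1 from funext fun v => by simp]
      exact z.2
    · have h := y.2
      rwa [eval_rename] at h
    · intro z
      apply Subtype.ext
      funext v
      simp
    · intro y
      apply Subtype.ext
      funext v
      simp



theorem alg (A : Type) [CommRing A] [Algebra ℚ A] [hFT : Algebra.FiniteType ℚ A] :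
    ∃ (m k : ℕ) (f : Fin k → MvPolynomial (Fin m) ℚ),
      Nonempty ((A →ₐ[ℚ] ℚ) ≃ {y : Fin m → ℚ // ∀ j, eval y (f j) = 0}) := by
  obtain ⟨m, π, hπ⟩ := Algebra.FiniteType.iff_quotient_mvPolynomial''.mp hFT
  set I : Ideal (MvPolynomial (Fin m) ℚ) := RingHom.ker π with hI
  have hfg : I.FG := IsNoetherian.noetherian I
  obtain ⟨s, hs⟩ := hfg
  set f : Fin s.card → MvPolynomial (Fin m) ℚ :=
    fun j => (s.equivFin.symm j : MvPolynomial (Fin m) ℚ) with hfdef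
  have hmem : ∀ j, f j ∈ I := fun j => by
    rw [← hs]; exact Ideal.subset_span (s.equivFin.symm j).2
  have haev : ∀ (y : Fin m → ℚ) (p : MvPolynomial (Fin m) ℚ), aeval y p = eval y p := by
    intro y p
    rfl
  have hIy : ∀ (y : Fin m → ℚ), (∀ j, eval y (f j) = 0) → ∀ a ∈ I, aeval y a = 0 := by
    intro y hy a ha
    rw [← hs] at ha
    have hsub : Ideal.span (↑s) ≤ RingHom.ker (aeval (R := ℚ) (S₁ := ℚ) y) := by
      rw [Ideal.span_le]
      intro x hx
      have h1 := hy (s.equivFin ⟨x, hx⟩)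
      rw [hfdef] at h1
      simp only [Equiv.symm_apply_apply] at h1
      simpa [RingHom.mem_ker, haev] using h1
    exact hsub ha
  set E := Ideal.quotientKerAlgEquivOfSurjective (R₁ := ℚ) hπ with hE
  have hEmk : ∀ p, E (Ideal.Quotient.mk I p) = π p := fun p => rfl
  have hEsymm : ∀ p, E.symm (π p) = Ideal.Quotient.mk I p := by
    intro p
    rw [← hEmk p, AlgEquiv.symm_apply_apply]
  refine ⟨m, s.card, f, ⟨?_⟩⟩
  have hcomp : ∀ (ψ : A →ₐ[ℚ] ℚ) (p : MvPolynomial (Fin m) ℚ),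
      ψ (π p) = eval (fun i => ψ (π (X i))) p := by
    intro ψ p
    have h1 : (ψ.comp π : MvPolynomial (Fin m) ℚ →ₐ[ℚ] ℚ) = aeval (⇑(ψ.comp π) ∘ X) :=
      aeval_unique _
    calc ψ (π p) = (ψ.comp π) p := rfl
      _ = aeval (⇑(ψ.comp π) ∘ X) p := by rw [← h1]
      _ = eval (fun i => ψ (π (X i))) p := haev _ _
  refine ⟨fun ψ => ⟨fun i => ψ (π (X i)), fun j => ?_⟩,
    fun y => ((Ideal.Quotient.liftₐ I (aeval y.1) (hIy y.1 y.2)).comp E.symm.toAlgHom),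
    ?_, ?_⟩
  · rw [← hcomp]
    have : π (f j) = 0 := by
      have := hmem j
      rwa [hI, RingHom.mem_ker] at this
    rw [this, map_zero]
  · intro ψ
    apply AlgHom.ext
    intro a
    obtain ⟨p, rfl⟩ := hπ a
    simp only [AlgHom.coe_comp, Function.comp_apply, AlgEquiv.coe_algHom]
    rw [hEsymm p]
    exact (hcomp ψ p).symm
  · intro y
    apply Subtype.ext
    funext i
    simp only [AlgHom.coe_comp, Function.comp_apply, AlgEquiv.coe_algHom]
    rw [hEsymm]
    show aeval y.1 (X i) = y.1 i
    simp

end Deg4Red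

/-- **Conclusion of the reduction to degree 4.** For every affine scheme `X` of finite
type over `ℚ`, there are an `n` and a polynomial `g ∈ ℚ[x_1,…,x_n]` of total degree
exactly `4` such that the set of `ℚ`-points of `X` is in bijection with the set of
rational zeros of `g`. -/
theorem affine_finite_type_points_equiv_degree_four_hypersurface
    (X : Scheme) [IsAffine X] (pX : X ⟶ Spec (CommRingCat.of ℚ))
    (hft : LocallyOfFiniteType pX) (hqc : QuasiCompact pX) :
    ∃ (n : ℕ) (g : MvPolynomial (Fin n) ℚ), g.totalDegree = 4 ∧
      Nonempty ({t : Spec (CommRingCat.of ℚ) ⟶ X // t ≫ pX = 𝟙 _}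
        ≃ {y : Fin n → ℚ // eval y g = 0}) := by
  haveI hss : Subsingleton (Spec (CommRingCat.of ℚ) ⟶ Spec (CommRingCat.of ℚ)) := by
    constructor
    intro a b
    apply Spec.fullyFaithful.homEquiv.symm.injective
    apply Quiver.Hom.unop_inj
    exact CommRingCat.hom_ext (Subsingleton.elim (α := ℚ →+* ℚ) _ _)
  have e1 : {t : Spec (CommRingCat.of ℚ) ⟶ X // t ≫ pX = 𝟙 _}
      ≃ (Spec (CommRingCat.of ℚ) ⟶ X) :=
    Equiv.subtypeUnivEquiv (fun t => Subsingleton.elim _ _)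
  -- the structure morphism on global sections
  let q : Spec Γ(X, ⊤) ⟶ Spec (CommRingCat.of ℚ) := X.isoSpec.inv ≫ pX
  let φ : CommRingCat.of ℚ ⟶ Γ(X, ⊤) := (Spec.fullyFaithful.homEquiv.symm q).unop
  have hq : Spec.map φ = q := Spec.fullyFaithful.homEquiv.apply_symm_apply q
  haveI hlq : LocallyOfFiniteType q := by
    haveI := hft
    infer_instance
  have hφ : RingHom.FiniteType φ.hom := by
    rw [← hq] at hlq
    exact HasRingHomProperty.Spec_iff.mp hlq
  letI : Algebra ℚ ↑Γ(X, ⊤) := RingHom.toAlgebra φ.hom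
  haveI : Algebra.FiniteType ℚ ↑Γ(X, ⊤) := hφ
  obtain ⟨m, k, fgen, ⟨e6⟩⟩ := Deg4Red.alg ↑Γ(X, ⊤)
  obtain ⟨n, g, hg, ⟨E⟩⟩ := Deg4Red.core m k fgen
  refine ⟨n, g, hg, ⟨?_⟩⟩
  have e2 : (Spec (CommRingCat.of ℚ) ⟶ X) ≃ (Spec (CommRingCat.of ℚ) ⟶ Spec Γ(X, ⊤)) :=
    ⟨fun t => t ≫ X.isoSpec.hom, fun t => t ≫ X.isoSpec.inv,
      fun t => by simp, fun t => by simp⟩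
  have e3 : (Spec (CommRingCat.of ℚ) ⟶ Spec Γ(X, ⊤))
      ≃ (Opposite.op (CommRingCat.of ℚ) ⟶ Opposite.op Γ(X, ⊤)) :=
    Spec.fullyFaithful.homEquiv.symm
  have e4 : (Opposite.op (CommRingCat.of ℚ) ⟶ Opposite.op Γ(X, ⊤))
      ≃ (Γ(X, ⊤) ⟶ CommRingCat.of ℚ) := opEquiv _ _
  have e5 : (Γ(X, ⊤) ⟶ CommRingCat.of ℚ) ≃ (↑Γ(X, ⊤) →+* ℚ) :=
    ⟨fun h => h.hom, fun h => (CommRingCat.ofHom h : Γ(X, ⊤) ⟶ CommRingCat.of ℚ), fun _ => rfl, fun _ => rfl⟩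
  have e6' : (↑Γ(X, ⊤) →+* ℚ) ≃ (↑Γ(X, ⊤) →ₐ[ℚ] ℚ) := RingHom.equivRatAlgHom _ _
  exact e1.trans (e2.trans (e3.trans (e4.trans (e5.trans (e6'.trans (e6.trans E))))))
end
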